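/- In a finite MDP, if there exists a strategy that is positively λ-synchronizing in T (for λ ∈ {always, eventually, weakly, strongly}), then the uniform strategy σ_u, which plays all actions uniformly at random at each step, is also positively λ-synchronizing in T. More specifically: if σ ⊆ σ_u in the sense of support inclusion of chosen actions after every history, then Supp(M^σ_i) ⊆ Supp(M^{σ_u}_i) for all i. -/

import Mathlib

open scoped BigOperators
open Classical Filter

/-- A finite Markov decision process with real transition probabilities. -/
structure MDP (Q A : Type) [Fintype Q] [Fintype A] where
  δ : Q → A → Q → ℝ
  δ_nonneg : ∀ q a q', 0 ≤ δ q a q'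
  δ_sum : ∀ q a, ∑ q', δ q a q' = 1

namespace MDP

variable {Q A : Type} [Fintype Q] [Fintype A]

/-- `d` is a probability distribution. -/
def IsDist (d : Q → ℝ) : Prop := (∀ q, 0 ≤ d q) ∧ ∑ q, d q = 1

/-- A (randomized, history-dependent) strategy maps a history (list of past
state-action pairs) and the current state to a distribution over actions. -/
def IsStrategy (σ : List (Q × A) → Q → A → ℝ) : Prop :=
  (∀ h q a, 0 ≤ σ h q a) ∧ ∀ h q, ∑ a, σ h q a = 1

/-- The probability of the finite path `qs` (with actions `as`) of length `i`,
under strategy `σ` from initial distribution `d0`. -/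
noncomputable def pathProb (M : MDP Q A) (σ : List (Q × A) → Q → A → ℝ)
    (d0 : Q → ℝ) (i : ℕ) (qs : Fin (i + 1) → Q) (as : Fin i → A) : ℝ :=
  d0 (qs 0) * ∏ j : Fin i,
    (σ (List.ofFn (fun k : Fin j.val =>
          (qs ⟨k.val, by have := k.isLt; have := j.isLt; omega⟩,
           as ⟨k.val, by have := k.isLt; have := j.isLt; omega⟩)))
        (qs j.castSucc) (as j))
      * M.δ (qs j.castSucc) (as j) (qs j.succ)

/-- The distribution over states after `i` steps (`M^σ_i`). -/
noncomputable def stepDist (M : MDP Q A) (σ : List (Q × A) → Q → A → ℝ)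
    (d0 : Q → ℝ) (i : ℕ) (q : Q) : ℝ :=
  ∑ qs : Fin (i + 1) → Q, ∑ as : Fin i → A,
    if qs (Fin.last i) = q then M.pathProb σ d0 i qs as else 0

/-- The probability mass that a (sub)distribution assigns to a set `T`. -/
noncomputable def mass (d : Q → ℝ) (T : Set Q) : ℝ := ∑ q, T.indicator d q

/-- The support of a (sub)distribution. -/
def supp {α : Type} (d : α → ℝ) : Set α := {q | 0 < d q}

/-- One-step sure predecessors of `Y`. -/
def Pre (M : MDP Q A) (Y : Set Q) : Set Q :=
  {q | ∃ a, ∀ q', 0 < M.δ q a q' → q' ∈ Y}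

/-- Probability of reaching `T` within `i` steps. -/
noncomputable def reachProb (M : MDP Q A) (σ : List (Q × A) → Q → A → ℝ)
    (d0 : Q → ℝ) (T : Set Q) (i : ℕ) : ℝ :=
  ∑ qs : Fin (i + 1) → Q, ∑ as : Fin i → A,
    if ∃ j, qs j ∈ T then M.pathProb σ d0 i qs as else 0

/-- `d0` is almost-sure winning for the reachability objective `◇T`:
some strategy reaches `T` with probability one. -/
def ASReach (M : MDP Q A) (d0 : Q → ℝ) (T : Set Q) : Prop :=
  ∃ σ, IsStrategy σ ∧ (⨆ i : ℕ, M.reachProb σ d0 T i) = 1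

/-- `d0` is limit-sure eventually synchronizing in `T`. -/
def LimitSureEventually (M : MDP Q A) (d0 : Q → ℝ) (T : Set Q) : Prop :=
  ∀ ε > (0 : ℝ), ∃ σ, IsStrategy σ ∧ ∃ i, 1 - ε ≤ mass (M.stepDist σ d0 i) T

/-- `d0` is almost-sure weakly synchronizing in `T`. -/
def ASWeakly (M : MDP Q A) (d0 : Q → ℝ) (T : Set Q) : Prop :=
  ∃ σ, IsStrategy σ ∧ ∀ ε > (0 : ℝ), {i : ℕ | 1 - ε ≤ mass (M.stepDist σ d0 i) T}.Infinite

/-- `d0` is almost-sure strongly synchronizing in `T`. -/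
def ASStrongly (M : MDP Q A) (d0 : Q → ℝ) (T : Set Q) : Prop :=
  ∃ σ, IsStrategy σ ∧ ∀ ε > (0 : ℝ), ∃ N, ∀ i ≥ N, 1 - ε ≤ mass (M.stepDist σ d0 i) T

/-- The uniform distribution on a set `S`. -/
noncomputable def uniformOn (S : Set Q) : Q → ℝ :=
  fun q => if q ∈ S then 1 / (S.ncard : ℝ) else 0

/-- The uniform strategy, playing all actions uniformly at random. -/
noncomputable def uniformStrategy (Q A : Type) [Fintype A] :
    List (Q × A) → Q → A → ℝ :=
  fun _ _ _ => 1 / (Fintype.card A : ℝ)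

/-- Action `a` is allowed in `q` w.r.t. `S` if all its successors stay in `S`. -/
def Allowed (M : MDP Q A) (S : Set Q) (q : Q) (a : A) : Prop :=
  ∀ q', 0 < M.δ q a q' → q' ∈ S

/-- Edge relation within `S` given the allowed actions. -/
def ECEdge (M : MDP Q A) (S : Set Q) (q q' : Q) : Prop :=
  q ∈ S ∧ q' ∈ S ∧ ∃ a, M.Allowed S q a ∧ 0 < M.δ q a q'

/-- `S` is an end-component: closed and strongly connected via allowed actions. -/
def IsEC (M : MDP Q A) (S : Set Q) : Prop :=
  (∀ q ∈ S, ∃ a, M.Allowed S q a) ∧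
  ∀ q ∈ S, ∀ q' ∈ S, Relation.ReflTransGen (M.ECEdge S) q q'

/-- The union of all end-components. -/
def ECUnion (M : MDP Q A) : Set Q := ⋃₀ {S | M.IsEC S}

/-- Positive always synchronizing in `T`. -/
def PosAlways (M : MDP Q A) (d0 : Q → ℝ) (T : Set Q) : Prop :=
  ∃ σ, IsStrategy σ ∧ ∀ i, 0 < mass (M.stepDist σ d0 i) T

/-- Positive eventually synchronizing in `T`. -/
def PosEvent (M : MDP Q A) (d0 : Q → ℝ) (T : Set Q) : Prop :=
  ∃ σ, IsStrategy σ ∧ ∃ i, 0 < mass (M.stepDist σ d0 i) T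

/-- Positive weakly synchronizing in `T`. -/
def PosWeakly (M : MDP Q A) (d0 : Q → ℝ) (T : Set Q) : Prop :=
  ∃ σ, IsStrategy σ ∧ ∀ N, ∃ i ≥ N, 0 < mass (M.stepDist σ d0 i) T

/-- Positive strongly synchronizing in `T`. -/
def PosStrongly (M : MDP Q A) (d0 : Q → ℝ) (T : Set Q) : Prop :=
  ∃ σ, IsStrategy σ ∧ ∃ N, ∀ i ≥ N, 0 < mass (M.stepDist σ d0 i) T

/-- Bounded always synchronizing in `T`. -/
def BndAlways (M : MDP Q A) (d0 : Q → ℝ) (T : Set Q) : Prop :=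
  ∃ σ, IsStrategy σ ∧ ∃ ε > (0 : ℝ), ∀ i, ε < mass (M.stepDist σ d0 i) T

/-- Bounded eventually synchronizing in `T`. -/
def BndEvent (M : MDP Q A) (d0 : Q → ℝ) (T : Set Q) : Prop :=
  ∃ σ, IsStrategy σ ∧ ∃ ε > (0 : ℝ), ∃ i, ε < mass (M.stepDist σ d0 i) T

/-- Bounded weakly synchronizing in `T`. -/
def BndWeakly (M : MDP Q A) (d0 : Q → ℝ) (T : Set Q) : Prop :=
  ∃ σ, IsStrategy σ ∧ ∃ ε > (0 : ℝ), ∀ N, ∃ i ≥ N, ε < mass (M.stepDist σ d0 i) T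

/-- Bounded strongly synchronizing in `T`. -/
def BndStrongly (M : MDP Q A) (d0 : Q → ℝ) (T : Set Q) : Prop :=
  ∃ σ, IsStrategy σ ∧ ∃ ε > (0 : ℝ), ∃ N, ∀ i ≥ N, ε < mass (M.stepDist σ d0 i) T

section Aux

variable {Q A : Type} [Fintype Q] [Fintype A] [Nonempty A]

lemma aux_ite_nonneg {P : Prop} [Decidable P] {x : ℝ} (hx : 0 ≤ x) :
    (0:ℝ) ≤ if P then x else 0 := by
  by_cases h : P <;> simp [h, hx]

lemma aux_pathProb_nonneg (M : MDP Q A) {σ : List (Q × A) → Q → A → ℝ}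
    (hσ : ∀ h q a, 0 ≤ σ h q a) {d0 : Q → ℝ} (hd0 : ∀ q, 0 ≤ d0 q)
    (i : ℕ) (qs : Fin (i + 1) → Q) (as : Fin i → A) :
    0 ≤ M.pathProb σ d0 i qs as :=
  mul_nonneg (hd0 _) (Finset.prod_nonneg fun _ _ =>
    mul_nonneg (hσ _ _ _) (M.δ_nonneg _ _ _))

lemma aux_pathProb_le (M : MDP Q A) {σ : List (Q × A) → Q → A → ℝ}
    (hσ : MDP.IsStrategy σ) {d0 : Q → ℝ} (hd0 : ∀ q, 0 ≤ d0 q)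
    (i : ℕ) (qs : Fin (i + 1) → Q) (as : Fin i → A) :
    M.pathProb σ d0 i qs as ≤
      (Fintype.card A : ℝ) ^ i * M.pathProb (MDP.uniformStrategy Q A) d0 i qs as := by
  have hc : (0 : ℝ) < (Fintype.card A : ℝ) := by
    exact_mod_cast Fintype.card_pos
  unfold MDP.pathProb MDP.uniformStrategy
  have h1 : ∀ (h : List (Q × A)) (q : Q) (a : A), σ h q a ≤ 1 := by
    intro h q a
    calc σ h q a ≤ ∑ b, σ h q b :=
          Finset.single_le_sum (fun b _ => hσ.1 h q b) (Finset.mem_univ a)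
      _ = 1 := hσ.2 h q
  have hrhs : (Fintype.card A : ℝ) ^ i *
      (d0 (qs 0) * ∏ j : Fin i, (1 / (Fintype.card A : ℝ)) * M.δ (qs j.castSucc) (as j) (qs j.succ))
      = d0 (qs 0) * ∏ j : Fin i, M.δ (qs j.castSucc) (as j) (qs j.succ) := by
    rw [Finset.prod_mul_distrib, Finset.prod_const]
    have : ((1 : ℝ) / (Fintype.card A : ℝ)) ^ (Finset.univ : Finset (Fin i)).card = ((Fintype.card A : ℝ) ^ i)⁻¹ := by
      simp [Finset.card_univ, one_div]
    rw [this]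
    field_simp
  rw [hrhs]
  apply mul_le_mul_of_nonneg_left _ (hd0 _)
  apply Finset.prod_le_prod
  · intro j _; exact mul_nonneg (hσ.1 _ _ _) (M.δ_nonneg _ _ _)
  · intro j _
    calc _ ≤ 1 * M.δ (qs j.castSucc) (as j) (qs j.succ) :=
          mul_le_mul_of_nonneg_right (h1 _ _ _) (M.δ_nonneg _ _ _)
      _ = _ := one_mul _

lemma aux_uniform_isStrategy : MDP.IsStrategy (MDP.uniformStrategy Q A) := by
  constructor
  · intro h q a
    unfold MDP.uniformStrategy
    positivity
  · intro h q
    unfold MDP.uniformStrategy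
    rw [Finset.sum_const, Finset.card_univ]
    have hc : (0 : ℝ) < (Fintype.card A : ℝ) := by exact_mod_cast Fintype.card_pos
    rw [nsmul_eq_mul]
    field_simp

lemma aux_stepDist_nonneg (M : MDP Q A) {σ : List (Q × A) → Q → A → ℝ}
    (hσ : ∀ h q a, 0 ≤ σ h q a) {d0 : Q → ℝ} (hd0 : ∀ q, 0 ≤ d0 q)
    (i : ℕ) (q : Q) : 0 ≤ M.stepDist σ d0 i q := by
  apply Finset.sum_nonneg; intro qs _
  apply Finset.sum_nonneg; intro as _
  exact aux_ite_nonneg (aux_pathProb_nonneg M hσ hd0 i qs as)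

lemma aux_stepDist_pos (M : MDP Q A) {σ : List (Q × A) → Q → A → ℝ}
    (hσ : MDP.IsStrategy σ) {d0 : Q → ℝ} (hd0 : ∀ q, 0 ≤ d0 q)
    (i : ℕ) (q : Q) (h : 0 < M.stepDist σ d0 i q) :
    0 < M.stepDist (MDP.uniformStrategy Q A) d0 i q := by
  have hc : (0 : ℝ) < (Fintype.card A : ℝ) ^ i := by positivity
  -- find a path with positive probability
  obtain ⟨qs, -, hqs⟩ : ∃ qs ∈ Finset.univ, 0 < ∑ as : Fin i → A,
      (if qs (Fin.last i) = q then M.pathProb σ d0 i qs as else 0) := by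
    by_contra hcon
    push_neg at hcon
    have : M.stepDist σ d0 i q ≤ 0 :=
      Finset.sum_nonpos fun qs _ => hcon qs (Finset.mem_univ qs)
    linarith
  obtain ⟨as, -, has⟩ : ∃ as ∈ Finset.univ, (0 : ℝ) <
      (if qs (Fin.last i) = q then M.pathProb σ d0 i qs as else 0) := by
    by_contra hcon
    push_neg at hcon
    have : (∑ as : Fin i → A,
        (if qs (Fin.last i) = q then M.pathProb σ d0 i qs as else 0)) ≤ 0 :=
      Finset.sum_nonpos fun as _ => hcon as (Finset.mem_univ as)
    linarith
  have hcond : qs (Fin.last i) = q := by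
    by_contra hne; simp [hne] at has
  rw [if_pos hcond] at has
  have hu : 0 < M.pathProb (MDP.uniformStrategy Q A) d0 i qs as := by
    have := aux_pathProb_le M hσ hd0 i qs as
    nlinarith
  have hterm : (0 : ℝ) < ∑ as' : Fin i → A,
      (if qs (Fin.last i) = q then M.pathProb (MDP.uniformStrategy Q A) d0 i qs as' else 0) := by
    exact Finset.sum_pos'
      (fun as' _ => aux_ite_nonneg (aux_pathProb_nonneg M aux_uniform_isStrategy.1 hd0 i qs as'))
      ⟨as, Finset.mem_univ as, by rw [if_pos hcond]; exact hu⟩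
  exact Finset.sum_pos' (fun qs' _ => Finset.sum_nonneg fun as' _ =>
      aux_ite_nonneg (aux_pathProb_nonneg M aux_uniform_isStrategy.1 hd0 i qs' as'))
    ⟨qs, Finset.mem_univ qs, hterm⟩

lemma aux_mass_pos_iff {d : Q → ℝ} (hd : ∀ q, 0 ≤ d q) (T : Set Q) :
    0 < MDP.mass d T ↔ ∃ q ∈ T, 0 < d q := by
  constructor
  · intro h
    by_contra hcon
    push_neg at hcon
    have : MDP.mass d T ≤ 0 := by
      apply Finset.sum_nonpos
      intro q _
      by_cases hq : q ∈ T
      · rw [Set.indicator_of_mem hq]; exact hcon q hq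
      · rw [Set.indicator_of_notMem hq]
    linarith
  · rintro ⟨q, hqT, hq⟩
    have : d q ≤ MDP.mass d T := by
      have : T.indicator d q = d q := Set.indicator_of_mem hqT d
      rw [← this]
      exact Finset.single_le_sum (fun r _ => Set.indicator_nonneg (fun s _ => hd s) r)
        (Finset.mem_univ q)
    linarith

lemma aux_mass_mono (M : MDP Q A) {σ : List (Q × A) → Q → A → ℝ}
    (hσ : MDP.IsStrategy σ) {d0 : Q → ℝ} (hd0 : ∀ q, 0 ≤ d0 q) (T : Set Q)
    (i : ℕ) (h : 0 < MDP.mass (M.stepDist σ d0 i) T) :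
    0 < MDP.mass (M.stepDist (MDP.uniformStrategy Q A) d0 i) T := by
  rw [aux_mass_pos_iff (aux_stepDist_nonneg M hσ.1 hd0 i) T] at h
  obtain ⟨q, hqT, hq⟩ := h
  rw [aux_mass_pos_iff (aux_stepDist_nonneg M aux_uniform_isStrategy.1 hd0 i) T]
  exact ⟨q, hqT, aux_stepDist_pos M hσ hd0 i q hq⟩

end Aux

end MDP

open MDP in
/-- If some strategy is positively λ-synchronizing in `T`, then so is the
uniform strategy `σ_u` (for λ ∈ {always, eventually, weakly, strongly});
more specifically, `σ ⊆ σ_u` (support inclusion after every history) implies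
`Supp(M^σ_i) ⊆ Supp(M^{σ_u}_i)` for all `i`. -/
theorem stmt11 {Q A : Type} [Fintype Q] [Fintype A] [Nonempty A] (M : MDP Q A)
    (d0 : Q → ℝ) (hd0 : IsDist d0) (T : Set Q) :
    (∀ σ, IsStrategy σ →
      (∀ h q, supp (σ h q) ⊆ supp (uniformStrategy Q A h q)) →
      ∀ i, supp (M.stepDist σ d0 i) ⊆
        supp (M.stepDist (uniformStrategy Q A) d0 i)) ∧
    (M.PosAlways d0 T →
      ∀ i, 0 < mass (M.stepDist (uniformStrategy Q A) d0 i) T) ∧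
    (M.PosEvent d0 T →
      ∃ i, 0 < mass (M.stepDist (uniformStrategy Q A) d0 i) T) ∧
    (M.PosWeakly d0 T →
      ∀ N, ∃ i ≥ N, 0 < mass (M.stepDist (uniformStrategy Q A) d0 i) T) ∧
    (M.PosStrongly d0 T →
      ∃ N, ∀ i ≥ N, 0 < mass (M.stepDist (uniformStrategy Q A) d0 i) T) := by
  have hd0' : ∀ q, 0 ≤ d0 q := hd0.1
  refine ⟨?_, ?_, ?_, ?_, ?_⟩
  · intro σ hσ _ i q hq
    exact aux_stepDist_pos M hσ hd0' i q hq
  · rintro ⟨σ, hσ, h⟩ i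
    exact aux_mass_mono M hσ hd0' T i (h i)
  · rintro ⟨σ, hσ, i, h⟩
    exact ⟨i, aux_mass_mono M hσ hd0' T i h⟩
  · rintro ⟨σ, hσ, h⟩ N
    obtain ⟨i, hiN, hi⟩ := h N
    exact ⟨i, hiN, aux_mass_mono M hσ hd0' T i hi⟩
  · rintro ⟨σ, hσ, N, h⟩
    exact ⟨N, fun i hi => aux_mass_mono M hσ hd0' T i (h i hi)⟩
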